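/- arXiv:1910.12751 — 4 statements merged into one kernel-verified Lean document; each statement's English description precedes it below -/
import Mathlib

section
/- Let M, P, H, V be vectors in ℝ³ with ‖M‖ = 1. Then the Landau–Lifshitz form V = -M×(P+H) - M×(M×(P+H)) holds if and only if the Gilbert-type form V - M×V = -2•(M×(P+H)) holds. (This is the pointwise algebraic content of the equivalence of the first and third forms of the Landau–Lifshitz–Gilbert equation in Lemma 4.1, with P playing the role of ΔM, H the external field, and V the material derivative ∂ₜM + (u·∇)M; one direction uses that the linear map x ↦ x - M×x on ℝ³ is injective.) -/
open scoped RealInnerProductSpace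

/-- The cross product on `EuclideanSpace ℝ (Fin 3)`. -/
noncomputable def cross3 (a b : EuclideanSpace ℝ (Fin 3)) : EuclideanSpace ℝ (Fin 3) :=
  (WithLp.equiv 2 (Fin 3 → ℝ)).symm
    (crossProduct (WithLp.equiv 2 (Fin 3 → ℝ) a) (WithLp.equiv 2 (Fin 3 → ℝ) b))

lemma cross3_apply (a b : EuclideanSpace ℝ (Fin 3)) (i : Fin 3) :
    cross3 a b i = ![a 1 * b 2 - a 2 * b 1, a 2 * b 0 - a 0 * b 2, a 0 * b 1 - a 1 * b 0] i := rfl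

/-- The map `x ↦ x - m × x` is injective: if `w = m × w` then `w = 0`. -/
lemma fixed_point_cross_zero (m0 m1 m2 u0 u1 u2 : ℝ)
    (e0 : u0 - (m1 * u2 - m2 * u1) = 0)
    (e1 : u1 - (m2 * u0 - m0 * u2) = 0)
    (e2 : u2 - (m0 * u1 - m1 * u0) = 0) :
    u0 = 0 ∧ u1 = 0 ∧ u2 = 0 := by
  have hsum : u0 ^ 2 + u1 ^ 2 + u2 ^ 2 = 0 := by
    linear_combination u0 * e0 + u1 * e1 + u2 * e2
  refine ⟨?_, ?_, ?_⟩ <;> nlinarith [sq_nonneg u0, sq_nonneg u1, sq_nonneg u2]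

/-- Equivalence of the Landau–Lifshitz form and the Gilbert-type form of the
Landau–Lifshitz–Gilbert equation, pointwise algebraic version (Lemma 4.1, forms 1 and 3). -/
theorem llg_first_third_form_equiv
    (M P H V : EuclideanSpace ℝ (Fin 3)) (hM : ‖M‖ = 1) :
    V = -cross3 M (P + H) - cross3 M (cross3 M (P + H)) ↔
      V - cross3 M V = -((2 : ℝ) • cross3 M (P + H)) := by
  rw [EuclideanSpace.norm_eq, Real.sqrt_eq_one] at hM
  have hn : M 0 ^ 2 + M 1 ^ 2 + M 2 ^ 2 = 1 := by
    simpa [Fin.sum_univ_three, Real.norm_eq_abs, sq_abs] using hM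
  constructor
  · intro h
    subst h
    set T := -cross3 M (P + H) - cross3 M (cross3 M (P + H)) with hT
    have g0 : (T - cross3 M T) 0 = (-((2 : ℝ) • cross3 M (P + H))) 0 := by
      simp only [hT, cross3_apply, PiLp.sub_apply, PiLp.neg_apply, PiLp.add_apply,
        PiLp.smul_apply, Matrix.cons_val_zero, Matrix.cons_val_one, Matrix.head_cons,
        Matrix.cons_val_two, Matrix.tail_cons, smul_eq_mul]
      linear_combination (-(M 1 * (P 2 + H 2) - M 2 * (P 1 + H 1))) * hn
    have g1 : (T - cross3 M T) 1 = (-((2 : ℝ) • cross3 M (P + H))) 1 := by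
      simp only [hT, cross3_apply, PiLp.sub_apply, PiLp.neg_apply, PiLp.add_apply,
        PiLp.smul_apply, Matrix.cons_val_zero, Matrix.cons_val_one, Matrix.head_cons,
        Matrix.cons_val_two, Matrix.tail_cons, smul_eq_mul]
      linear_combination (-(M 2 * (P 0 + H 0) - M 0 * (P 2 + H 2))) * hn
    have g2 : (T - cross3 M T) 2 = (-((2 : ℝ) • cross3 M (P + H))) 2 := by
      simp only [hT, cross3_apply, PiLp.sub_apply, PiLp.neg_apply, PiLp.add_apply,
        PiLp.smul_apply, Matrix.cons_val_zero, Matrix.cons_val_one, Matrix.head_cons,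
        Matrix.cons_val_two, Matrix.tail_cons, smul_eq_mul]
      linear_combination (-(M 0 * (P 1 + H 1) - M 1 * (P 0 + H 0))) * hn
    ext i
    fin_cases i
    exacts [g0, g1, g2]
  · intro h
    have h0 := congrFun (congrArg WithLp.ofLp h) 0
    have h1 := congrFun (congrArg WithLp.ofLp h) 1
    have h2 := congrFun (congrArg WithLp.ofLp h) 2
    simp only [cross3_apply, PiLp.sub_apply, PiLp.neg_apply, PiLp.add_apply,
      PiLp.smul_apply, Matrix.cons_val_zero, Matrix.cons_val_one, Matrix.head_cons,
      Matrix.cons_val_two, Matrix.tail_cons, smul_eq_mul] at h0 h1 h2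
    obtain ⟨z0, z1, z2⟩ := fixed_point_cross_zero (M 0) (M 1) (M 2)
      (V 0 - (-(M 1 * (P 2 + H 2) - M 2 * (P 1 + H 1)) -
        (M 1 * (M 0 * (P 1 + H 1) - M 1 * (P 0 + H 0)) -
         M 2 * (M 2 * (P 0 + H 0) - M 0 * (P 2 + H 2)))))
      (V 1 - (-(M 2 * (P 0 + H 0) - M 0 * (P 2 + H 2)) -
        (M 2 * (M 1 * (P 2 + H 2) - M 2 * (P 1 + H 1)) -
         M 0 * (M 0 * (P 1 + H 1) - M 1 * (P 0 + H 0)))))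
      (V 2 - (-(M 0 * (P 1 + H 1) - M 1 * (P 0 + H 0)) -
        (M 0 * (M 2 * (P 0 + H 0) - M 0 * (P 2 + H 2)) -
         M 1 * (M 1 * (P 2 + H 2) - M 2 * (P 1 + H 1)))))
      (by linear_combination h0 + (M 1 * (P 2 + H 2) - M 2 * (P 1 + H 1)) * hn)
      (by linear_combination h1 + (M 2 * (P 0 + H 0) - M 0 * (P 2 + H 2)) * hn)
      (by linear_combination h2 + (M 0 * (P 1 + H 1) - M 1 * (P 0 + H 0)) * hn)
    have g0 : V 0 = (-cross3 M (P + H) - cross3 M (cross3 M (P + H))) 0 := by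
      simp only [cross3_apply, PiLp.sub_apply, PiLp.neg_apply, PiLp.add_apply,
        Matrix.cons_val_zero, Matrix.cons_val_one, Matrix.head_cons,
        Matrix.cons_val_two, Matrix.tail_cons]
      linear_combination z0
    have g1 : V 1 = (-cross3 M (P + H) - cross3 M (cross3 M (P + H))) 1 := by
      simp only [cross3_apply, PiLp.sub_apply, PiLp.neg_apply, PiLp.add_apply,
        Matrix.cons_val_zero, Matrix.cons_val_one, Matrix.head_cons,
        Matrix.cons_val_two, Matrix.tail_cons]
      linear_combination z1
    have g2 : V 2 = (-cross3 M (P + H) - cross3 M (cross3 M (P + H))) 2 := by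
      simp only [cross3_apply, PiLp.sub_apply, PiLp.neg_apply, PiLp.add_apply,
        Matrix.cons_val_zero, Matrix.cons_val_one, Matrix.head_cons,
        Matrix.cons_val_two, Matrix.tail_cons]
      linear_combination z2
    ext i
    fin_cases i
    exacts [g0, g1, g2]
end

section
/- Let d ≥ 1, let u : ℝ × ℝᵈ → ℝᵈ and F : ℝ × ℝᵈ → ℝ^{d×d} be twice continuously differentiable, suppose the spatial divergence of u vanishes everywhere (Σᵢ ∂ᵢuᵢ(t,x) = 0 for all (t,x)), and suppose F solves the transport equation ∂ₜF_{ij} + Σ_k u_k ∂_k F_{ij} = Σ_k ∂_k u_i F_{kj} at every point (t,x) and all indices i,j. Then the column divergence h of F, defined by h_j(t,x) = Σᵢ ∂ᵢ F_{ij}(t,x), satisfies the transport equation ∂ₜ h_j + Σ_k u_k ∂_k h_j = 0 at every point (t,x) and every index j. (This is the computation at the end of the proof of Lemma 4.2 showing that div F is transported by the flow.) -/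
/-- Time partial derivative of a scalar function on `ℝ × ℝᵈ`. -/
noncomputable def pt {d : ℕ} (f : ℝ × EuclideanSpace ℝ (Fin d) → ℝ)
    (p : ℝ × EuclideanSpace ℝ (Fin d)) : ℝ :=
  fderiv ℝ f p (1, 0)

/-- Spatial partial derivative in the `k`-th direction of a scalar function on `ℝ × ℝᵈ`. -/
noncomputable def px {d : ℕ} (k : Fin d) (f : ℝ × EuclideanSpace ℝ (Fin d) → ℝ)
    (p : ℝ × EuclideanSpace ℝ (Fin d)) : ℝ :=
  fderiv ℝ f p (0, EuclideanSpace.single k 1)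

section AuxHelpers

variable {E : Type*} [NormedAddCommGroup E] [NormedSpace ℝ E]

lemma aux_diff {f : E → ℝ} (hf : ContDiff ℝ 2 f) (w : E) :
    Differentiable ℝ (fun q => fderiv ℝ f q w) := by
  have h1 : Differentiable ℝ (fderiv ℝ f) :=
    (hf.fderiv_right (m := 1) (by norm_num)).differentiable one_ne_zero
  exact (ContinuousLinearMap.apply ℝ ℝ w).differentiable.comp h1

lemma aux_swap {f : E → ℝ} (hf : ContDiff ℝ 2 f) (p : E) (v w : E) :
    fderiv ℝ (fun q => fderiv ℝ f q w) p v = fderiv ℝ (fun q => fderiv ℝ f q v) p w := by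
  have h1 : Differentiable ℝ (fderiv ℝ f) :=
    (hf.fderiv_right (m := 1) (by norm_num)).differentiable one_ne_zero
  have key : ∀ z : E, fderiv ℝ (fun q => fderiv ℝ f q z) p
      = (ContinuousLinearMap.apply ℝ ℝ z).comp (fderiv ℝ (fderiv ℝ f) p) := by
    intro z
    exact ((ContinuousLinearMap.apply ℝ ℝ z).hasFDerivAt.comp p (h1 p).hasFDerivAt).fderiv
  rw [key, key]
  simp only [ContinuousLinearMap.coe_comp', Function.comp_apply,
    ContinuousLinearMap.apply_apply]
  exact second_derivative_symmetric (fun y => (hf.differentiable two_ne_zero y).hasFDerivAt)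
    (h1 p).hasFDerivAt v w

end AuxHelpers

noncomputable def ET (d : ℕ) : ℝ × EuclideanSpace ℝ (Fin d) := (1, 0)
noncomputable def EX {d : ℕ} (k : Fin d) : ℝ × EuclideanSpace ℝ (Fin d) :=
  (0, EuclideanSpace.single k 1)

lemma pt_eq {d : ℕ} (f : ℝ × EuclideanSpace ℝ (Fin d) → ℝ) (p) :
    pt f p = fderiv ℝ f p (ET d) := rfl

lemma px_eq {d : ℕ} (k : Fin d) (f : ℝ × EuclideanSpace ℝ (Fin d) → ℝ) (p) :
    px k f p = fderiv ℝ f p (EX k) := rfl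

/-- If `u` is divergence free and `F` solves the transport equation
`∂ₜF_{ij} + Σ_k u_k ∂_k F_{ij} = Σ_k ∂_k u_i F_{kj}`, then the column divergence
`h_j = Σᵢ ∂ᵢ F_{ij}` satisfies `∂ₜ h_j + Σ_k u_k ∂_k h_j = 0`
(the computation at the end of the proof of Lemma 4.2). -/
theorem div_of_transported_is_transported
    (d : ℕ) (hd : 1 ≤ d)
    (u : Fin d → ℝ × EuclideanSpace ℝ (Fin d) → ℝ)
    (F : Fin d → Fin d → ℝ × EuclideanSpace ℝ (Fin d) → ℝ)
    (hu : ∀ i, ContDiff ℝ 2 (u i))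
    (hF : ∀ i j, ContDiff ℝ 2 (F i j))
    (hdiv : ∀ p, ∑ i, px i (u i) p = 0)
    (htrans : ∀ p (i j : Fin d),
        pt (F i j) p + ∑ k, u k p * px k (F i j) p = ∑ k, px k (u i) p * F k j p) :
    ∀ p (j : Fin d),
      pt (fun q => ∑ i, px i (F i j) q) p
        + ∑ k, u k p * px k (fun q => ∑ i, px i (F i j) q) p = 0 := by
  intro p j
  simp only [pt_eq, px_eq] at hdiv htrans ⊢
  have hud : ∀ a, Differentiable ℝ (u a) := fun a => (hu a).differentiable two_ne_zero
  have hFd : ∀ a b, Differentiable ℝ (F a b) := fun a b => (hF a b).differentiable two_ne_zero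
  have hFp : ∀ a b (v : ℝ × EuclideanSpace ℝ (Fin d)),
      Differentiable ℝ (fun q => fderiv ℝ (F a b) q v) := fun a b v => aux_diff (hF a b) v
  have hup : ∀ a (v : ℝ × EuclideanSpace ℝ (Fin d)),
      Differentiable ℝ (fun q => fderiv ℝ (u a) q v) := fun a v => aux_diff (hu a) v
  -- derivative-of-sum helper for the goal
  have hsumF : ∀ v : ℝ × EuclideanSpace ℝ (Fin d),
      fderiv ℝ (fun q => ∑ i, fderiv ℝ (F i j) q (EX i)) p v
        = ∑ i, fderiv ℝ (fun q => fderiv ℝ (F i j) q (EX i)) p v := by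
    intro v
    rw [fderiv_fun_sum (fun i _ => (hFp i j (EX i)) p)]
    simp
  simp only [hsumF]
  -- differentiated transport identity
  have heqf : ∀ i, (fun q => fderiv ℝ (F i j) q (ET d)
        + ∑ k, u k q * fderiv ℝ (F i j) q (EX k))
      = (fun q => ∑ k, fderiv ℝ (u i) q (EX k) * F k j q) :=
    fun i => funext (fun q => htrans q i j)
  have key : ∀ (i : Fin d) (v : ℝ × EuclideanSpace ℝ (Fin d)),
      fderiv ℝ (fun q => fderiv ℝ (F i j) q (ET d)) p v
        + ∑ k, (u k p * fderiv ℝ (fun q => fderiv ℝ (F i j) q (EX k)) p v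
            + fderiv ℝ (F i j) p (EX k) * fderiv ℝ (u k) p v)
      = ∑ k, (fderiv ℝ (fun q => fderiv ℝ (u i) q (EX k)) p v * F k j p
            + fderiv ℝ (u i) p (EX k) * fderiv ℝ (F k j) p v) := by
    intro i v
    have h := congrArg (fun f => fderiv ℝ f p v) (heqf i)
    have hL : fderiv ℝ (fun q => fderiv ℝ (F i j) q (ET d)
          + ∑ k, u k q * fderiv ℝ (F i j) q (EX k)) p v
        = fderiv ℝ (fun q => fderiv ℝ (F i j) q (ET d)) p v
          + ∑ k, (u k p * fderiv ℝ (fun q => fderiv ℝ (F i j) q (EX k)) p v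
              + fderiv ℝ (F i j) p (EX k) * fderiv ℝ (u k) p v) := by
      rw [fderiv_fun_add ((hFp i j (ET d)) p)
        ((Differentiable.fun_sum (fun k _ => (hud k).fun_mul (hFp i j (EX k)))) p)]
      rw [ContinuousLinearMap.add_apply]
      congr 1
      rw [fderiv_fun_sum (fun k _ => ((hud k).fun_mul (hFp i j (EX k))) p)]
      rw [ContinuousLinearMap.sum_apply]
      refine Finset.sum_congr rfl fun k _ => ?_
      rw [fderiv_fun_mul ((hud k) p) ((hFp i j (EX k)) p)]
      simp [smul_eq_mul]
    have hR : fderiv ℝ (fun q => ∑ k, fderiv ℝ (u i) q (EX k) * F k j q) p v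
        = ∑ k, (fderiv ℝ (fun q => fderiv ℝ (u i) q (EX k)) p v * F k j p
            + fderiv ℝ (u i) p (EX k) * fderiv ℝ (F k j) p v) := by
      rw [fderiv_fun_sum (fun k _ => ((hup i (EX k)).fun_mul (hFd k j)) p)]
      rw [ContinuousLinearMap.sum_apply]
      refine Finset.sum_congr rfl fun k _ => ?_
      rw [fderiv_fun_mul ((hup i (EX k)) p) ((hFd k j) p)]
      simp [smul_eq_mul]
      ring
    rw [← hL, ← hR]
    exact h
  -- vanishing of the differentiated divergence
  have hdivzero : ∀ k : Fin d,
      ∑ i, fderiv ℝ (fun q => fderiv ℝ (u i) q (EX i)) p (EX k) = 0 := by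
    intro k
    have h0 : (fun q => ∑ i, fderiv ℝ (u i) q (EX i)) = fun _ => (0 : ℝ) :=
      funext hdiv
    have : fderiv ℝ (fun q => ∑ i, fderiv ℝ (u i) q (EX i)) p (EX k)
        = ∑ i, fderiv ℝ (fun q => fderiv ℝ (u i) q (EX i)) p (EX k) := by
      rw [fderiv_fun_sum (fun i _ => (hup i (EX i)) p)]
      simp
    rw [← this, h0]
    simp
  -- apply key with v = EX i and symmetrize second derivatives
  have key2 : ∀ i : Fin d,
      fderiv ℝ (fun q => fderiv ℝ (F i j) q (EX i)) p (ET d)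
        + ∑ k, u k p * fderiv ℝ (fun q => fderiv ℝ (F i j) q (EX i)) p (EX k)
      = (∑ k, fderiv ℝ (fun q => fderiv ℝ (u i) q (EX i)) p (EX k) * F k j p)
        + (∑ k, fderiv ℝ (u i) p (EX k) * fderiv ℝ (F k j) p (EX i))
        - ∑ k, fderiv ℝ (F i j) p (EX k) * fderiv ℝ (u k) p (EX i) := by
    intro i
    have h := key i (EX i)
    rw [aux_swap (hF i j) p (EX i) (ET d)] at h
    have hswapF : ∀ k : Fin d, fderiv ℝ (fun q => fderiv ℝ (F i j) q (EX k)) p (EX i)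
        = fderiv ℝ (fun q => fderiv ℝ (F i j) q (EX i)) p (EX k) :=
      fun k => aux_swap (hF i j) p (EX i) (EX k)
    have hswapu : ∀ k : Fin d, fderiv ℝ (fun q => fderiv ℝ (u i) q (EX k)) p (EX i)
        = fderiv ℝ (fun q => fderiv ℝ (u i) q (EX i)) p (EX k) :=
      fun k => aux_swap (hu i) p (EX i) (EX k)
    simp only [hswapF, hswapu] at h
    rw [Finset.sum_add_distrib, Finset.sum_add_distrib] at h
    linarith
  -- sum key2 over i and conclude
  have H : ∑ i, (fderiv ℝ (fun q => fderiv ℝ (F i j) q (EX i)) p (ET d)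
        + ∑ k, u k p * fderiv ℝ (fun q => fderiv ℝ (F i j) q (EX i)) p (EX k))
      = ∑ i, ((∑ k, fderiv ℝ (fun q => fderiv ℝ (u i) q (EX i)) p (EX k) * F k j p)
        + (∑ k, fderiv ℝ (u i) p (EX k) * fderiv ℝ (F k j) p (EX i))
        - ∑ k, fderiv ℝ (F i j) p (EX k) * fderiv ℝ (u k) p (EX i)) :=
    Finset.sum_congr rfl fun i _ => key2 i
  have hRzero : ∑ i, ((∑ k, fderiv ℝ (fun q => fderiv ℝ (u i) q (EX i)) p (EX k) * F k j p)
        + (∑ k, fderiv ℝ (u i) p (EX k) * fderiv ℝ (F k j) p (EX i))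
        - ∑ k, fderiv ℝ (F i j) p (EX k) * fderiv ℝ (u k) p (EX i)) = 0 := by
    rw [Finset.sum_sub_distrib, Finset.sum_add_distrib]
    have h1 : ∑ i, ∑ k, fderiv ℝ (fun q => fderiv ℝ (u i) q (EX i)) p (EX k) * F k j p
        = 0 := by
      rw [Finset.sum_comm]
      refine Finset.sum_eq_zero fun k _ => ?_
      rw [← Finset.sum_mul, hdivzero k, zero_mul]
    have h2 : ∑ i, ∑ k, fderiv ℝ (F i j) p (EX k) * fderiv ℝ (u k) p (EX i)
        = ∑ i, ∑ k, fderiv ℝ (u i) p (EX k) * fderiv ℝ (F k j) p (EX i) := by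
      rw [Finset.sum_comm]
      exact Finset.sum_congr rfl fun i _ => Finset.sum_congr rfl fun k _ => mul_comm _ _
    rw [h1, h2]
    ring
  -- reconcile goal shape with H
  have hgoal : ∑ k, u k p * ∑ i, fderiv ℝ (fun q => fderiv ℝ (F i j) q (EX i)) p (EX k)
      = ∑ i, ∑ k, u k p * fderiv ℝ (fun q => fderiv ℝ (F i j) q (EX i)) p (EX k) := by
    rw [Finset.sum_comm]
    exact Finset.sum_congr rfl fun k _ => Finset.mul_sum _ _ _
  rw [hgoal, ← Finset.sum_add_distrib, H]
  exact hRzero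
end

section
/- Let d ≥ 1, T > 0, and let u : [0,T] × ℝᵈ → ℝᵈ be continuously differentiable with spatial gradient bounded uniformly on [0,T] × ℝᵈ. Suppose F₁, F₂ : [0,T] × ℝᵈ → ℝ^{d×d} are continuously differentiable and both solve the transport equation ∂ₜF_{ij} + Σ_k u_k ∂_k F_{ij} = Σ_k ∂_k u_i F_{kj} at every point of [0,T] × ℝᵈ, with the same initial datum F₁(0,·) = F₂(0,·). Then F₁ = F₂ on [0,T] × ℝᵈ. (This is the uniqueness part of Lemma 4.2 for the transport system for the deformation gradient, proved via characteristics.) -/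
lemma aux_norm_le {d : ℕ} (w : EuclideanSpace ℝ (Fin d)) (M : ℝ) (hM : 0 ≤ M)
    (h : ∀ i, |w i| ≤ M) : ‖w‖ ≤ Real.sqrt d * M := by
  rw [EuclideanSpace.norm_eq]
  have h1 : ∑ i, ‖w i‖ ^ 2 ≤ (d : ℝ) * M ^ 2 := by
    calc ∑ i, ‖w i‖ ^ 2 ≤ ∑ _i : Fin d, M ^ 2 := by
          refine Finset.sum_le_sum fun i _ => ?_
          rw [Real.norm_eq_abs]
          exact pow_le_pow_left₀ (abs_nonneg _) (h i) 2
      _ = (d : ℝ) * M ^ 2 := by simp [mul_comm]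
  calc Real.sqrt (∑ i, ‖w i‖ ^ 2) ≤ Real.sqrt ((d : ℝ) * M ^ 2) := Real.sqrt_le_sqrt h1
    _ = Real.sqrt d * M := by
        rw [Real.sqrt_mul (Nat.cast_nonneg d), Real.sqrt_sq hM]

lemma aux_cs {d : ℕ} (a : Fin d → ℝ) (C : ℝ) (hC : 0 ≤ C) (ha : ∀ k, |a k| ≤ C)
    (v : EuclideanSpace ℝ (Fin d)) :
    |∑ k, a k * v k| ≤ Real.sqrt d * C * ‖v‖ := by
  let a' : EuclideanSpace ℝ (Fin d) := WithLp.toLp 2 a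
  have h1 : ∑ k, a k * v k = inner (𝕜 := ℝ) a' v := by
    rw [PiLp.inner_apply]
    simp [a', RCLike.inner_apply, mul_comm]
  rw [h1]
  calc |inner (𝕜 := ℝ) a' v| ≤ ‖a'‖ * ‖v‖ := abs_real_inner_le_norm a' v
    _ ≤ Real.sqrt d * C * ‖v‖ :=
      mul_le_mul_of_nonneg_right (aux_norm_le a' C hC ha) (norm_nonneg v)

lemma aux_clm_zero {d : ℕ} (L : (ℝ × EuclideanSpace ℝ (Fin d)) →L[ℝ] ℝ)
    (v : EuclideanSpace ℝ (Fin d)) :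
    L (0, v) = ∑ k, v k * L (0, EuclideanSpace.single k 1) := by
  have hv : v = ∑ k, v k • EuclideanSpace.single k (1 : ℝ) := by
    have := (EuclideanSpace.basisFun (Fin d) ℝ).sum_repr v
    simp only [EuclideanSpace.basisFun_apply, EuclideanSpace.basisFun_repr] at this
    exact this.symm
  have hv2 : ((0 : ℝ), v) = ∑ k, v k • ((0 : ℝ), EuclideanSpace.single k (1 : ℝ)) := by
    rw [Prod.ext_iff]
    constructor
    · simp [Prod.fst_sum]
    · simpa [Prod.snd_sum] using hv
  rw [hv2, map_sum]
  refine Finset.sum_congr rfl fun k _ => ?_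
  rw [map_smul, smul_eq_mul]

lemma aux_chain {d : ℕ} {f : ℝ × EuclideanSpace ℝ (Fin d) → ℝ} (hf : ContDiff ℝ 1 f)
    {α : ℝ → EuclideanSpace ℝ (Fin d)} {w : EuclideanSpace ℝ (Fin d)} {s : Set ℝ} {t : ℝ}
    (hα : HasDerivWithinAt α w s t) :
    HasDerivWithinAt (fun τ => f (τ, α τ))
      (pt f (t, α t) + ∑ k, w k * px k f (t, α t)) s t := by
  have hγ : HasDerivWithinAt (fun τ => (τ, α τ)) ((1 : ℝ), w) s t :=
    (hasDerivWithinAt_id t s).prodMk hα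
  have hfd : HasFDerivAt f (fderiv ℝ f (t, α t)) (t, α t) :=
    ((hf.differentiable one_ne_zero) (t, α t)).hasFDerivAt
  have h := hfd.comp_hasDerivWithinAt t hγ
  refine h.congr_deriv ?_
  have h1 : ((1 : ℝ), w) = ((1 : ℝ), (0 : EuclideanSpace ℝ (Fin d))) + ((0 : ℝ), w) := by
    simp
  rw [h1, map_add, aux_clm_zero]
  rfl

lemma aux_spatial_lip {d : ℕ} {u : ℝ × EuclideanSpace ℝ (Fin d) → ℝ} (hu : ContDiff ℝ 1 u)
    {C : ℝ} (hC : 0 ≤ C) {t : ℝ} (hb : ∀ x k, |px k u (t, x)| ≤ C)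
    (x y : EuclideanSpace ℝ (Fin d)) :
    |u (t, y) - u (t, x)| ≤ Real.sqrt d * C * ‖y - x‖ := by
  have key : ∀ z : EuclideanSpace ℝ (Fin d),
      HasFDerivWithinAt (fun x => u (t, x))
        ((fderiv ℝ u (t, z)).comp (ContinuousLinearMap.inr ℝ ℝ (EuclideanSpace ℝ (Fin d))))
        Set.univ z := by
    intro z
    have h1 : HasFDerivAt u (fderiv ℝ u (t, z)) (t, z) :=
      ((hu.differentiable one_ne_zero) (t, z)).hasFDerivAt
    exact (h1.comp z (hasFDerivAt_prodMk_right t z)).hasFDerivWithinAt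
  have bound : ∀ z : EuclideanSpace ℝ (Fin d), z ∈ Set.univ →
      ‖(fderiv ℝ u (t, z)).comp (ContinuousLinearMap.inr ℝ ℝ (EuclideanSpace ℝ (Fin d)))‖
        ≤ Real.sqrt d * C := by
    intro z _
    refine ContinuousLinearMap.opNorm_le_bound _ (by positivity) fun v => ?_
    rw [ContinuousLinearMap.comp_apply, ContinuousLinearMap.inr_apply, Real.norm_eq_abs]
    rw [aux_clm_zero]
    simpa [mul_comm, px] using aux_cs (fun k => px k u (t, z)) C hC (fun k => hb z k) v
  have := convex_univ.norm_image_sub_le_of_norm_hasFDerivWithin_le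
    (fun z _ => key z) bound (Set.mem_univ x) (Set.mem_univ y)
  simpa [Real.norm_eq_abs] using this

lemma aux_dist_le {d : ℕ} (w w' : EuclideanSpace ℝ (Fin d)) (M : ℝ) (hM : 0 ≤ M)
    (h : ∀ i, dist (w i) (w' i) ≤ M) : dist w w' ≤ Real.sqrt d * M := by
  rw [EuclideanSpace.dist_eq]
  have h1 : ∑ i, dist (w i) (w' i) ^ 2 ≤ (d : ℝ) * M ^ 2 := by
    calc ∑ i, dist (w i) (w' i) ^ 2 ≤ ∑ _i : Fin d, M ^ 2 :=
          Finset.sum_le_sum fun i _ => pow_le_pow_left₀ dist_nonneg (h i) 2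
      _ = (d : ℝ) * M ^ 2 := by simp [mul_comm]
  calc Real.sqrt (∑ i, dist (w i) (w' i) ^ 2) ≤ Real.sqrt ((d : ℝ) * M ^ 2) :=
        Real.sqrt_le_sqrt h1
    _ = Real.sqrt d * M := by rw [Real.sqrt_mul (Nat.cast_nonneg d), Real.sqrt_sq hM]

lemma aux_matrix_lip {d : ℕ} {C : ℝ} (hC : 0 ≤ C) (a : Fin d → Fin d → ℝ)
    (ha : ∀ i k, |a i k| ≤ C) :
    LipschitzWith (Real.toNNReal (Real.sqrt d * (Real.sqrt d * C)))
      (fun y : EuclideanSpace ℝ (Fin d) =>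
        (EuclideanSpace.equiv (Fin d) ℝ).symm (fun i => ∑ k, a i k * y k)) := by
  apply LipschitzWith.of_dist_le_mul
  intro y z
  rw [Real.coe_toNNReal _ (by positivity)]
  have hyz : ‖y - z‖ = dist y z := (dist_eq_norm y z).symm
  have hcomp : ∀ i : Fin d,
      dist (((EuclideanSpace.equiv (Fin d) ℝ).symm (fun i => ∑ k, a i k * y k)) i)
        (((EuclideanSpace.equiv (Fin d) ℝ).symm (fun i => ∑ k, a i k * z k)) i)
        ≤ Real.sqrt d * C * dist y z := by
    intro i
    show dist ((∑ k, a i k * y k : ℝ)) ((∑ k, a i k * z k : ℝ)) ≤ _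
    rw [Real.dist_eq, ← Finset.sum_sub_distrib, ← hyz]
    have h1 : ∀ k, a i k * y k - a i k * z k = a i k * (y - z) k := by
      intro k; rw [PiLp.sub_apply]; ring
    simp_rw [h1]
    exact aux_cs (a i) C hC (ha i) (y - z)
  have h2 := aux_dist_le ((EuclideanSpace.equiv (Fin d) ℝ).symm (fun i => ∑ k, a i k * y k))
    ((EuclideanSpace.equiv (Fin d) ℝ).symm (fun i => ∑ k, a i k * z k))
    (Real.sqrt d * C * dist y z) (by positivity) hcomp
  have heq : Real.sqrt d * (Real.sqrt d * C) * dist y z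
      = Real.sqrt d * (Real.sqrt d * C * dist y z) := by ring
  rw [heq]
  exact h2

lemma key_step (d : ℕ) (T : ℝ)
    (u : Fin d → ℝ × EuclideanSpace ℝ (Fin d) → ℝ)
    (hu : ∀ i, ContDiff ℝ 1 (u i))
    (C : ℝ) (hC : 0 ≤ C)
    (hgrad : ∀ t ∈ Set.Icc (0 : ℝ) T, ∀ x (i k : Fin d), |px k (u i) (t, x)| ≤ C)
    (F₁ F₂ : Fin d → Fin d → ℝ × EuclideanSpace ℝ (Fin d) → ℝ)
    (hF₁ : ∀ i j, ContDiff ℝ 1 (F₁ i j))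
    (hF₂ : ∀ i j, ContDiff ℝ 1 (F₂ i j))
    (htrans₁ : ∀ t ∈ Set.Icc (0 : ℝ) T, ∀ x (i j : Fin d),
        pt (F₁ i j) (t, x) + ∑ k, u k (t, x) * px k (F₁ i j) (t, x)
          = ∑ k, px k (u i) (t, x) * F₁ k j (t, x))
    (htrans₂ : ∀ t ∈ Set.Icc (0 : ℝ) T, ∀ x (i j : Fin d),
        pt (F₂ i j) (t, x) + ∑ k, u k (t, x) * px k (F₂ i j) (t, x)
          = ∑ k, px k (u i) (t, x) * F₂ k j (t, x))
    (s t₀ : ℝ) (hs0 : 0 ≤ s) (hst : s ≤ t₀) (ht₀T : t₀ ≤ T)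
    (hsmall : Real.sqrt d * (Real.sqrt d * C) * (t₀ - s) ≤ 1 / 2)
    (hs : ∀ x (i j : Fin d), F₁ i j (s, x) = F₂ i j (s, x)) :
    ∀ x (i j : Fin d), F₁ i j (t₀, x) = F₂ i j (t₀, x) := by
  intro x₀ i j
  set K0 : ℝ := Real.sqrt d * (Real.sqrt d * C) with hK0def
  have hK0 : 0 ≤ K0 := by positivity
  set K0' : NNReal := Real.toNNReal K0 with hK0'def
  -- the velocity field as an `E`-valued map
  set vf : ℝ → EuclideanSpace ℝ (Fin d) → EuclideanSpace ℝ (Fin d) :=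
    fun t x => (EuclideanSpace.equiv (Fin d) ℝ).symm (fun i => u i (t, x)) with hvfdef
  -- spatial Lipschitz bound for the velocity field
  have hvlip : ∀ t ∈ Set.Icc (0 : ℝ) T, LipschitzWith K0' (vf t) := by
    intro t ht
    apply LipschitzWith.of_dist_le_mul
    intro y z
    rw [hK0'def, Real.coe_toNNReal _ hK0]
    have hcomp : ∀ i : Fin d, dist (vf t y i) (vf t z i)
        ≤ Real.sqrt d * C * dist y z := by
      intro i
      show dist (u i (t, y)) (u i (t, z)) ≤ _
      rw [Real.dist_eq, dist_eq_norm]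
      exact aux_spatial_lip (hu i) hC (fun x k => hgrad t ht x i k) z y
    have h2 := aux_dist_le (vf t y) (vf t z) (Real.sqrt d * C * dist y z)
      (by positivity) hcomp
    have heq : K0 * dist y z = Real.sqrt d * (Real.sqrt d * C * dist y z) := by
      rw [hK0def]; ring
    rw [heq]
    exact h2
  -- bound for the velocity along the vertical line through x₀
  have hvcont : ∀ x : EuclideanSpace ℝ (Fin d), Continuous fun t => vf t x := by
    intro x
    apply ((EuclideanSpace.equiv (Fin d) ℝ).symm.continuous).comp
    exact continuous_pi fun i => (hu i).continuous.comp (continuous_id.prodMk continuous_const)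
  obtain ⟨A₀, hA₀⟩ := isCompact_Icc.exists_bound_of_continuousOn
    ((hvcont x₀).continuousOn : ContinuousOn (fun t => vf t x₀) (Set.Icc s t₀))
  set A : ℝ := max A₀ 0 with hAdef
  have hA : 0 ≤ A := le_max_right _ _
  have hAb : ∀ t ∈ Set.Icc s t₀, ‖vf t x₀‖ ≤ A :=
    fun t ht => le_trans (hA₀ t ht) (le_max_left _ _)
  set R : ℝ := 2 * A * (t₀ - s) + 1 with hRdef
  have hR : 0 ≤ R := by
    have := sub_nonneg.2 hst
    positivity
  set Cb : ℝ := K0 * R + A with hCbdef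
  have hIccsub : Set.Icc s t₀ ⊆ Set.Icc (0 : ℝ) T :=
    Set.Icc_subset_Icc hs0 ht₀T
  have hCb : 0 ≤ Cb := by positivity
  have hpl : IsPicardLindelof vf (⟨t₀, hst, le_rfl⟩ : Set.Icc s t₀) x₀ R.toNNReal 0
      Cb.toNNReal K0' :=
    { lipschitzOnWith := fun t ht => ((hvlip t (hIccsub ht)).lipschitzOnWith)
      continuousOn := fun x _ => (hvcont x).continuousOn
      norm_le := by
        intro t ht x hx
        rw [Real.coe_toNNReal _ hR] at hx
        rw [Real.coe_toNNReal _ hCb]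
        have h1 : ‖vf t x - vf t x₀‖ ≤ K0 * R := by
          have := (hvlip t (hIccsub ht)).dist_le_mul x x₀
          rw [hK0'def, Real.coe_toNNReal _ hK0] at this
          rw [← dist_eq_norm]
          exact le_trans this
            (mul_le_mul_of_nonneg_left (Metric.mem_closedBall.mp hx) hK0)
        calc ‖vf t x‖ = ‖(vf t x - vf t x₀) + vf t x₀‖ := by rw [sub_add_cancel]
          _ ≤ ‖vf t x - vf t x₀‖ + ‖vf t x₀‖ := norm_add_le _ _
          _ ≤ K0 * R + A := add_le_add h1 (hAb t ht)
      mul_max_le := by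
        simp only [NNReal.coe_zero, sub_zero]
        rw [Real.coe_toNNReal _ hCb, Real.coe_toNNReal _ hR]
        show Cb * max (t₀ - t₀) (t₀ - s) ≤ R
        rw [sub_self, max_eq_right (sub_nonneg.2 hst)]
        have h1 : K0 * (t₀ - s) * R ≤ (1 / 2) * R :=
          mul_le_mul_of_nonneg_right hsmall hR
        have h2 : 0 ≤ A * (t₀ - s) := mul_nonneg hA (sub_nonneg.2 hst)
        rw [hCbdef, hRdef] at *
        nlinarith [h1, h2] }
  obtain ⟨α, hα0, hαd⟩ := hpl.exists_eq_forall_mem_Icc_hasDerivWithinAt₀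
  have hαcont : ContinuousOn α (Set.Icc s t₀) :=
    fun t ht => (hαd t ht).continuousWithinAt
  have hα' : ∀ t ∈ Set.Ico s t₀, HasDerivWithinAt α (vf t (α t)) (Set.Ici t) t := by
    intro t ht
    exact (hαd t ⟨ht.1, ht.2.le⟩).mono_of_mem_nhdsWithin (Icc_mem_nhdsGE_of_mem ht)
  -- clamp function
  set cl : ℝ → ℝ := fun t => max s (min t t₀) with hcldef
  have hclmem : ∀ t, cl t ∈ Set.Icc (0 : ℝ) T := by
    intro t
    constructor
    · exact le_trans hs0 (le_max_left _ _)
    · exact max_le (le_trans hst ht₀T) (le_trans (min_le_right t t₀) ht₀T)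
  have hcleq : ∀ t ∈ Set.Ico s t₀, cl t = t := by
    intro t ht
    rw [hcldef]
    simp only
    rw [min_eq_left ht.2.le, max_eq_right ht.1]
  -- the linear ODE field along the characteristic
  set vmat : ℝ → EuclideanSpace ℝ (Fin d) → EuclideanSpace ℝ (Fin d) :=
    fun t y => (EuclideanSpace.equiv (Fin d) ℝ).symm
      (fun i => ∑ k, px k (u i) (cl t, α (cl t)) * y k) with hvmatdef
  have hv : ∀ t, LipschitzOnWith K0' (vmat t) Set.univ := by
    intro t
    exact (aux_matrix_lip hC (fun i k => px k (u i) (cl t, α (cl t)))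
      (fun i' k => hgrad (cl t) (hclmem t) (α (cl t)) i' k)).lipschitzOnWith
  -- the difference along the characteristic
  set g0 : ℝ → (Fin d → ℝ) := fun t i => F₁ i j (t, α t) - F₂ i j (t, α t) with hg0def
  set g : ℝ → EuclideanSpace ℝ (Fin d) :=
    fun t => (EuclideanSpace.equiv (Fin d) ℝ).symm (g0 t) with hgdef
  have hgcont : ContinuousOn g (Set.Icc s t₀) := by
    apply ((EuclideanSpace.equiv (Fin d) ℝ).symm.continuous).comp_continuousOn
    apply continuousOn_pi.mpr
    intro i'
    exact ((hF₁ i' j).continuous.comp_continuousOn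
        (continuousOn_id.prodMk hαcont)).sub
      ((hF₂ i' j).continuous.comp_continuousOn (continuousOn_id.prodMk hαcont))
  have hgd : ∀ t ∈ Set.Ico s t₀, HasDerivWithinAt g (vmat t (g t)) (Set.Ici t) t := by
    intro t ht
    have htT : t ∈ Set.Icc (0 : ℝ) T := hIccsub ⟨ht.1, ht.2.le⟩
    have hg0d : HasDerivWithinAt g0
        (fun i' => ∑ k, px k (u i') (t, α t) * g0 t k) (Set.Ici t) t := by
      apply hasDerivWithinAt_pi.mpr
      intro i'
      have h1 : HasDerivWithinAt (fun τ => F₁ i' j (τ, α τ))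
          (pt (F₁ i' j) (t, α t) + ∑ k, u k (t, α t) * px k (F₁ i' j) (t, α t))
          (Set.Ici t) t := aux_chain (hF₁ i' j) (hα' t ht)
      have h2 : HasDerivWithinAt (fun τ => F₂ i' j (τ, α τ))
          (pt (F₂ i' j) (t, α t) + ∑ k, u k (t, α t) * px k (F₂ i' j) (t, α t))
          (Set.Ici t) t := aux_chain (hF₂ i' j) (hα' t ht)
      rw [htrans₁ t htT (α t) i' j] at h1
      rw [htrans₂ t htT (α t) i' j] at h2
      have h3 := h1.sub h2
      have heq : (∑ k, px k (u i') (t, α t) * F₁ k j (t, α t))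
          - (∑ k, px k (u i') (t, α t) * F₂ k j (t, α t))
          = ∑ k, px k (u i') (t, α t) * g0 t k := by
        rw [← Finset.sum_sub_distrib]
        refine Finset.sum_congr rfl fun k _ => ?_
        rw [hg0def]
        ring
      rw [heq] at h3
      exact h3
    have h4 := (((EuclideanSpace.equiv (Fin d) ℝ).symm :
        (Fin d → ℝ) →L[ℝ] EuclideanSpace ℝ (Fin d)).hasFDerivAt).comp_hasDerivWithinAt t hg0d
    have hveq : vmat t (g t) = ((EuclideanSpace.equiv (Fin d) ℝ).symm :
        (Fin d → ℝ) →L[ℝ] EuclideanSpace ℝ (Fin d))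
        (fun i' => ∑ k, px k (u i') (t, α t) * g0 t k) := by
      rw [hvmatdef]
      simp only
      rw [hcleq t ht]
      rfl
    rw [hveq]
    exact h4
  have hzero : ∀ t ∈ Set.Ico s t₀,
      HasDerivWithinAt (fun _ : ℝ => (0 : EuclideanSpace ℝ (Fin d)))
        (vmat t ((fun _ : ℝ => (0 : EuclideanSpace ℝ (Fin d))) t)) (Set.Ici t) t := by
    intro t _
    have hz : vmat t (0 : EuclideanSpace ℝ (Fin d)) = 0 := by
      rw [hvmatdef]
      simp only
      have : (fun i' => ∑ k, px k (u i') (cl t, α (cl t))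
          * (0 : EuclideanSpace ℝ (Fin d)) k) = (0 : Fin d → ℝ) := by
        funext i'
        simp
      rw [this, map_zero]
    rw [hz]
    exact hasDerivWithinAt_const t _ _
  have hinit : g s = (fun _ : ℝ => (0 : EuclideanSpace ℝ (Fin d))) s := by
    show (EuclideanSpace.equiv (Fin d) ℝ).symm (g0 s) = 0
    have : g0 s = 0 := by
      funext i'
      rw [hg0def]
      simp only [Pi.zero_apply]
      rw [hs (α s) i' j]
      ring
    rw [this, map_zero]
  have huniq := ODE_solution_unique_of_mem_Icc_right (fun t _ => hv t) hgcont hgd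
    (fun t _ => Set.mem_univ _) continuousOn_const hzero
    (fun t _ => Set.mem_univ _) hinit
  have hend : g t₀ = 0 := huniq ⟨hst, le_rfl⟩
  have hg0end : g0 t₀ = 0 := by
    have := (EuclideanSpace.equiv (Fin d) ℝ).symm.injective
      (hend.trans (map_zero _).symm)
    exact this
  have hcomp := congrFun hg0end i
  rw [hg0def] at hcomp
  simp only [Pi.zero_apply] at hcomp
  rw [hα0] at hcomp
  linarith [hcomp]


/-- Uniqueness for the transport system for the deformation gradient
(the uniqueness part of Lemma 4.2): two `C¹` solutions of
`∂ₜF_{ij} + Σ_k u_k ∂_k F_{ij} = Σ_k ∂_k u_i F_{kj}` on `[0,T] × ℝᵈ` with the same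
initial datum coincide, provided the spatial gradient of `u` is uniformly bounded. -/
theorem transport_uniqueness
    (d : ℕ) (hd : 1 ≤ d) (T : ℝ) (hT : 0 < T)
    (u : Fin d → ℝ × EuclideanSpace ℝ (Fin d) → ℝ)
    (hu : ∀ i, ContDiff ℝ 1 (u i))
    (C : ℝ)
    (hgrad : ∀ t ∈ Set.Icc (0 : ℝ) T, ∀ x (i k : Fin d), |px k (u i) (t, x)| ≤ C)
    (F₁ F₂ : Fin d → Fin d → ℝ × EuclideanSpace ℝ (Fin d) → ℝ)
    (hF₁ : ∀ i j, ContDiff ℝ 1 (F₁ i j))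
    (hF₂ : ∀ i j, ContDiff ℝ 1 (F₂ i j))
    (htrans₁ : ∀ t ∈ Set.Icc (0 : ℝ) T, ∀ x (i j : Fin d),
        pt (F₁ i j) (t, x) + ∑ k, u k (t, x) * px k (F₁ i j) (t, x)
          = ∑ k, px k (u i) (t, x) * F₁ k j (t, x))
    (htrans₂ : ∀ t ∈ Set.Icc (0 : ℝ) T, ∀ x (i j : Fin d),
        pt (F₂ i j) (t, x) + ∑ k, u k (t, x) * px k (F₂ i j) (t, x)
          = ∑ k, px k (u i) (t, x) * F₂ k j (t, x))
    (hinit : ∀ x (i j : Fin d), F₁ i j (0, x) = F₂ i j (0, x)) :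
    ∀ t ∈ Set.Icc (0 : ℝ) T, ∀ x (i j : Fin d), F₁ i j (t, x) = F₂ i j (t, x) := by
  have hC : 0 ≤ C :=
    le_trans (abs_nonneg _) (hgrad 0 ⟨le_rfl, hT.le⟩ 0 ⟨0, hd⟩ ⟨0, hd⟩)
  set K0 : ℝ := Real.sqrt d * (Real.sqrt d * C) with hK0def
  have hK0 : 0 ≤ K0 := by positivity
  set δ : ℝ := 1 / (2 * (K0 + 1)) with hδdef
  have hδpos : 0 < δ := by positivity
  have hsmallδ : K0 * δ ≤ 1 / 2 := by
    rw [hδdef, mul_one_div, div_le_div_iff₀ (by positivity) two_pos]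
    linarith
  have main : ∀ n : ℕ, ∀ t ∈ Set.Icc (0 : ℝ) (min ((n : ℝ) * δ) T),
      ∀ x (i j : Fin d), F₁ i j (t, x) = F₂ i j (t, x) := by
    intro n
    induction n with
    | zero =>
      intro t ht x i j
      have ht0 : t = 0 := by
        have h1 : t ≤ 0 := le_trans ht.2 (by simp [hT.le])
        linarith [ht.1]
      rw [ht0]
      exact hinit x i j
    | succ n ih =>
      intro t ht x i j
      by_cases hcase : t ≤ min ((n : ℝ) * δ) T
      · exact ih t ⟨ht.1, hcase⟩ x i j
      · push_neg at hcase
        have hnδT : (n : ℝ) * δ ≤ T := by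
          by_contra hcon
          push_neg at hcon
          have h1 : min ((n : ℝ) * δ) T = T := min_eq_right hcon.le
          have h2 : t ≤ T := le_trans ht.2 (min_le_right _ _)
          rw [h1] at hcase
          linarith
        have hseq : min ((n : ℝ) * δ) T = (n : ℝ) * δ := min_eq_left hnδT
        have hs0 : (0 : ℝ) ≤ (n : ℝ) * δ := by positivity
        have hst : (n : ℝ) * δ ≤ t := by
          rw [hseq] at hcase; exact hcase.le
        have htT : t ≤ T := le_trans ht.2 (min_le_right _ _)
        have htδ : t - (n : ℝ) * δ ≤ δ := by
          have h1 : t ≤ ((n : ℝ) + 1) * δ := by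
            have := le_trans ht.2 (min_le_left _ _)
            push_cast at this
            linarith
          linarith
        have hsmall : K0 * (t - (n : ℝ) * δ) ≤ 1 / 2 :=
          le_trans (mul_le_mul_of_nonneg_left htδ hK0) hsmallδ
        have hprev : ∀ x (i j : Fin d),
            F₁ i j ((n : ℝ) * δ, x) = F₂ i j ((n : ℝ) * δ, x) := by
          intro x i j
          exact ih ((n : ℝ) * δ) ⟨hs0, by rw [hseq]⟩ x i j
        exact key_step d T u hu C hC hgrad F₁ F₂ hF₁ hF₂ htrans₁ htrans₂
          ((n : ℝ) * δ) t hs0 hst htT (by rw [← hK0def]; exact hsmall) hprev x i j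
  intro t ht x i j
  set n : ℕ := ⌈T / δ⌉₊ with hndef
  have hTn : T ≤ (n : ℝ) * δ := by
    have h1 : T / δ ≤ (n : ℝ) := Nat.le_ceil _
    calc T = T / δ * δ := by field_simp
      _ ≤ (n : ℝ) * δ := mul_le_mul_of_nonneg_right h1 hδpos.le
  have hmin : min ((n : ℝ) * δ) T = T := min_eq_right hTn
  exact main n t ⟨ht.1, by rw [hmin]; exact ht.2⟩ x i j
end

section
/- Let d ≥ 1, T > 0, and let u : [0,T] × ℝᵈ → ℝᵈ be twice continuously differentiable with spatial gradient bounded uniformly on [0,T] × ℝᵈ and with vanishing spatial divergence, Σᵢ ∂ᵢuᵢ = 0 everywhere. Let F : [0,T] × ℝᵈ → ℝ^{d×d} be twice continuously differentiable, solve the transport equation ∂ₜF_{ij} + Σ_k u_k ∂_k F_{ij} = Σ_k ∂_k u_i F_{kj} at every point, and satisfy Σᵢ ∂ᵢF_{ij}(0, x) = 0 for every x ∈ ℝᵈ and every j. Then Σᵢ ∂ᵢF_{ij}(t, x) = 0 for every (t,x) ∈ [0,T] × ℝᵈ and every j; i.e., the divergence-free constraint on F propagates in time. (This is the final assertion of Lemma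 4.2: if div F₀ = 0 then div F = 0 for all times.) -/
namespace DivFreeAux

open Set

variable {d : ℕ}

local notation "E'" => EuclideanSpace ℝ (Fin d)
local notation "P'" => (ℝ × EuclideanSpace ℝ (Fin d))

lemma sum_single_smul (v : EuclideanSpace ℝ (Fin d)) :
    ∑ k, (v k) • EuclideanSpace.single k (1:ℝ) = v := by
  ext j
  have : (∑ k, (v k) • EuclideanSpace.single k (1:ℝ)) j
      = ∑ k, ((v k) • EuclideanSpace.single k (1:ℝ)) j :=
    (congrFun (WithLp.ofLp_sum _ _ _ _) j).trans (Finset.sum_apply j _ _)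
  rw [this]; simp [EuclideanSpace.single_apply]

lemma abs_coord_le_norm (v : EuclideanSpace ℝ (Fin d)) (k : Fin d) : |v k| ≤ ‖v‖ := by
  rw [EuclideanSpace.norm_eq]
  have h1 : |v k| = Real.sqrt (‖v k‖^2) := by
    rw [Real.sqrt_sq_eq_abs]; simp
  rw [h1]
  apply Real.sqrt_le_sqrt
  exact Finset.single_le_sum (f := fun i => ‖v i‖^2) (fun i _ => by positivity) (Finset.mem_univ k)

lemma contDiff_px (f : P' → ℝ) (hf : ContDiff ℝ 2 f) (k : Fin d) :
    ContDiff ℝ 1 (px k f) := by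
  have h1 : ContDiff ℝ 1 (fderiv ℝ f) := hf.fderiv_right (by norm_num)
  exact h1.clm_apply contDiff_const

lemma contDiff_pt (f : P' → ℝ) (hf : ContDiff ℝ 2 f) :
    ContDiff ℝ 1 (pt f) := by
  have h1 : ContDiff ℝ 1 (fderiv ℝ f) := hf.fderiv_right (by norm_num)
  exact h1.clm_apply contDiff_const

lemma second_comm (f : P' → ℝ) (hf : ContDiff ℝ 2 f) (p y z : P') :
    fderiv ℝ (fun q => fderiv ℝ f q z) p y = fderiv ℝ (fun q => fderiv ℝ f q y) p z := by
  have hsym : IsSymmSndFDerivAt ℝ f p :=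
    (hf.contDiffAt).isSymmSndFDerivAt (by norm_num)
  have hd : DifferentiableAt ℝ (fderiv ℝ f) p :=
    ((hf.fderiv_right (by norm_num : (1:WithTop ℕ∞) + 1 ≤ 2)).differentiable one_ne_zero).differentiableAt
  have h1 : ∀ w : P', fderiv ℝ (fun q => fderiv ℝ f q w) p
      = (fderiv ℝ (fderiv ℝ f) p).flip w := by
    intro w
    have h := fderiv_clm_apply (c := fderiv ℝ f) (u := fun _ => w) hd (differentiableAt_const w)
    simpa using h
  rw [h1 z, h1 y]
  exact hsym y z

lemma px_px_comm (f : P' → ℝ) (hf : ContDiff ℝ 2 f) (k l : Fin d) (p : P') :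
    px k (px l f) p = px l (px k f) p :=
  second_comm f hf p _ _

lemma pt_px_comm (f : P' → ℝ) (hf : ContDiff ℝ 2 f) (k : Fin d) (p : P') :
    pt (px k f) p = px k (pt f) p :=
  second_comm f hf p _ _

lemma vec_decomp (c : ℝ) (v : E') :
    ((c, v) : P') = c • ((1:ℝ), (0:E')) + ∑ k, (v k) • ((0:ℝ), EuclideanSpace.single k (1:ℝ)) := by
  have h2 : ∑ k, (v k) • (((0:ℝ), EuclideanSpace.single k (1:ℝ)) : P')
      = ((0:ℝ), ∑ k, (v k) • EuclideanSpace.single k (1:ℝ)) := by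
    rw [Prod.ext_iff]
    constructor
    · rw [Prod.fst_sum]; simp
    · rw [Prod.snd_sum]; simp
  rw [h2, sum_single_smul]
  rw [Prod.ext_iff]
  constructor <;> simp

lemma fderiv_dir (f : P' → ℝ) {p : P'} (c : ℝ) (v : E') :
    fderiv ℝ f p (c, v) = c * pt f p + ∑ k, v k * px k f p := by
  have hdecomp : ∀ k : Fin d,
      (fderiv ℝ f p) ((v k) • (((0:ℝ), EuclideanSpace.single k (1:ℝ)) : P')) = v k * px k f p := by
    intro k; rw [map_smul]; simp [px]
  rw [vec_decomp c v, map_add, map_smul, map_sum]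
  simp only [hdecomp]
  simp [pt]

lemma slice_hasFDerivAt (t : ℝ) (x : E') :
    HasFDerivAt (fun y : E' => ((t, y) : P'))
      (ContinuousLinearMap.prod (0 : E' →L[ℝ] ℝ) (ContinuousLinearMap.id ℝ E')) x :=
  HasFDerivAt.prodMk (hasFDerivAt_const t x) (hasFDerivAt_id x)

lemma px_of_slice_zero (ψ : P' → ℝ) {t : ℝ} {x : E'}
    (hzero : ∀ y, ψ (t, y) = 0) (hdiff : DifferentiableAt ℝ ψ (t, x)) (k : Fin d) :
    px k ψ (t, x) = 0 := by
  have hcomp := hdiff.hasFDerivAt.comp x (slice_hasFDerivAt t x)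
  have h0 : HasFDerivAt (fun y : E' => ψ (t, y)) (0 : E' →L[ℝ] ℝ) x := by
    have : (fun y : E' => ψ (t, y)) = fun _ => (0:ℝ) := funext hzero
    rw [this]; exact hasFDerivAt_const 0 x
  have h := hcomp.unique h0
  have h2 := congrArg (fun L : E' →L[ℝ] ℝ => L (EuclideanSpace.single k 1)) h
  simpa [px] using h2

lemma fderiv_slice (f : P' → ℝ) {t : ℝ} {x : E'} (hf : DifferentiableAt ℝ f (t, x)) (v : E') :
    fderiv ℝ (fun y : E' => f (t, y)) x v = fderiv ℝ f (t, x) (0, v) := by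
  have hcomp := hf.hasFDerivAt.comp x (slice_hasFDerivAt t x)
  have h : fderiv ℝ (fun y : E' => f (t, y)) x
      = (fderiv ℝ f (t, x)).comp
        (ContinuousLinearMap.prod (0 : E' →L[ℝ] ℝ) (ContinuousLinearMap.id ℝ E')) :=
    hcomp.fderiv
  rw [h]; simp

lemma D_add {A B : P' → ℝ} {p : P'} (hA : DifferentiableAt ℝ A p) (hB : DifferentiableAt ℝ B p)
    (y : P') : fderiv ℝ (fun q => A q + B q) p y = fderiv ℝ A p y + fderiv ℝ B p y := by
  rw [fderiv_fun_add hA hB]; rfl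

lemma D_sub {A B : P' → ℝ} {p : P'} (hA : DifferentiableAt ℝ A p) (hB : DifferentiableAt ℝ B p)
    (y : P') : fderiv ℝ (fun q => A q - B q) p y = fderiv ℝ A p y - fderiv ℝ B p y := by
  rw [fderiv_fun_sub hA hB]; rfl

lemma D_mul {A B : P' → ℝ} {p : P'} (hA : DifferentiableAt ℝ A p) (hB : DifferentiableAt ℝ B p)
    (y : P') : fderiv ℝ (fun q => A q * B q) p y
      = A p * fderiv ℝ B p y + fderiv ℝ A p y * B p := by
  rw [fderiv_fun_mul hA hB]
  simp [mul_comm]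

lemma D_sum {ι : Type*} (s : Finset ι) {A : ι → P' → ℝ} {p : P'}
    (hA : ∀ i ∈ s, DifferentiableAt ℝ (A i) p) (y : P') :
    fderiv ℝ (fun q => ∑ i ∈ s, A i q) p y = ∑ i ∈ s, fderiv ℝ (A i) p y := by
  rw [fderiv_fun_sum hA]
  exact ContinuousLinearMap.sum_apply _ _ _

end DivFreeAux

set_option maxHeartbeats 1000000 in
open Set DivFreeAux in
/-- Propagation of the divergence-free constraint by the transport equation
(the final assertion of Lemma 4.2): if `u` is divergence free with uniformly bounded
spatial gradient and `F` solves `∂ₜF_{ij} + Σ_k u_k ∂_k F_{ij} = Σ_k ∂_k u_i F_{kj}`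
with `div F(0,·) = 0`, then `div F(t,·) = 0` for all `t ∈ [0,T]`. -/
theorem div_free_propagates
    (d : ℕ) (hd : 1 ≤ d) (T : ℝ) (hT : 0 < T)
    (u : Fin d → ℝ × EuclideanSpace ℝ (Fin d) → ℝ)
    (hu : ∀ i, ContDiff ℝ 2 (u i))
    (C : ℝ)
    (hgrad : ∀ t ∈ Set.Icc (0 : ℝ) T, ∀ x (i k : Fin d), |px k (u i) (t, x)| ≤ C)
    (hdiv : ∀ p, ∑ i, px i (u i) p = 0)
    (F : Fin d → Fin d → ℝ × EuclideanSpace ℝ (Fin d) → ℝ)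
    (hF : ∀ i j, ContDiff ℝ 2 (F i j))
    (htrans : ∀ t ∈ Set.Icc (0 : ℝ) T, ∀ x (i j : Fin d),
        pt (F i j) (t, x) + ∑ k, u k (t, x) * px k (F i j) (t, x)
          = ∑ k, px k (u i) (t, x) * F k j (t, x))
    (hinit : ∀ x (j : Fin d), ∑ i, px i (F i j) (0, x) = 0) :
    ∀ t ∈ Set.Icc (0 : ℝ) T, ∀ x (j : Fin d), ∑ i, px i (F i j) (t, x) = 0 := by
  classical
  -- Basic differentiability facts
  have hdu : ∀ i, Differentiable ℝ (u i) := fun i => (hu i).differentiable (by norm_num)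
  have hdF : ∀ i j, Differentiable ℝ (F i j) := fun i j => (hF i j).differentiable (by norm_num)
  have hdpxu : ∀ k i, Differentiable ℝ (px k (u i)) :=
    fun k i => (contDiff_px _ (hu i) k).differentiable one_ne_zero
  have hdpxF : ∀ k i j, Differentiable ℝ (px k (F i j)) :=
    fun k i j => (contDiff_px _ (hF i j) k).differentiable one_ne_zero
  have hdptF : ∀ i j, Differentiable ℝ (pt (F i j)) :=
    fun i j => (contDiff_pt _ (hF i j)).differentiable one_ne_zero
  intro t ht x j
  -- The divergence function g
  set g : ℝ × EuclideanSpace ℝ (Fin d) → ℝ := fun p => ∑ i, px i (F i j) p with hgdef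
  suffices hgoal : g (t, x) = 0 by exact hgoal
  have hgC1 : ContDiff ℝ 1 g := ContDiff.sum (fun i _ => contDiff_px _ (hF i j) i)
  have hgdiff : Differentiable ℝ g := hgC1.differentiable one_ne_zero
  -- Transport equation for g
  have htg : ∀ s ∈ Set.Icc (0:ℝ) T, ∀ y,
      pt g (s, y) + ∑ k, u k (s, y) * px k g (s, y) = 0 := by
    intro s hs y
    set p : ℝ × EuclideanSpace ℝ (Fin d) := (s, y) with hp
    -- expansion of the differentiated transport equation, for each i
    have expand : ∀ i : Fin d,
        px i (pt (F i j)) p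
          + (∑ k, (u k p * px i (px k (F i j)) p + px i (u k) p * px k (F i j) p))
          - (∑ k, (px k (u i) p * px i (F k j) p + px i (px k (u i)) p * F k j p)) = 0 := by
      intro i
      have hzero : ∀ y', (fun q => (pt (F i j) q + ∑ k, u k q * px k (F i j) q)
          - ∑ k, px k (u i) q * F k j q) (s, y') = 0 := by
        intro y'
        have h := htrans s hs y' i j
        simp only [sub_eq_zero]
        exact h
      have hdA : Differentiable ℝ (fun q => pt (F i j) q + ∑ k, u k q * px k (F i j) q) := by
        apply (hdptF i j).add
        exact Differentiable.fun_sum (fun k _ => (hdu k).mul (hdpxF k i j))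
      have hdB : Differentiable ℝ (fun q => ∑ k, px k (u i) q * F k j q) :=
        Differentiable.fun_sum (fun k _ => (hdpxu k i).mul (hdF k j))
      have h0 : px i (fun q => (pt (F i j) q + ∑ k, u k q * px k (F i j) q)
            - ∑ k, px k (u i) q * F k j q) (s, y) = 0 := px_of_slice_zero (t := s) (x := y) _ hzero ((hdA.sub hdB) (s, y)) i
      have e_top : px i (fun q => (pt (F i j) q + ∑ k, u k q * px k (F i j) q)
            - ∑ k, px k (u i) q * F k j q) (s, y)
          = px i (fun q => pt (F i j) q + ∑ k, u k q * px k (F i j) q) (s, y)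
            - px i (fun q => ∑ k, px k (u i) q * F k j q) (s, y) :=
        D_sub (hdA _) (hdB _) _
      have e_A : px i (fun q => pt (F i j) q + ∑ k, u k q * px k (F i j) q) (s, y)
          = px i (pt (F i j)) (s, y)
            + px i (fun q => ∑ k, u k q * px k (F i j) q) (s, y) :=
        D_add ((hdptF i j) _) ((Differentiable.fun_sum (fun k _ => (hdu k).mul (hdpxF k i j))) _) _
      have e_S1 : px i (fun q => ∑ k, u k q * px k (F i j) q) (s, y)
          = ∑ k, px i (fun q => u k q * px k (F i j) q) (s, y) :=
        D_sum Finset.univ (fun k _ => ((hdu k).mul (hdpxF k i j)) _) _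
      have e_S2 : px i (fun q => ∑ k, px k (u i) q * F k j q) (s, y)
          = ∑ k, px i (fun q => px k (u i) q * F k j q) (s, y) :=
        D_sum Finset.univ (fun k _ => ((hdpxu k i).mul (hdF k j)) _) _
      have e_M1 : ∑ k, px i (fun q => u k q * px k (F i j) q) (s, y)
          = ∑ k, (u k (s, y) * px i (px k (F i j)) (s, y)
              + px i (u k) (s, y) * px k (F i j) (s, y)) :=
        Finset.sum_congr rfl (fun k _ => D_mul ((hdu k) _) ((hdpxF k i j) _) _)
      have e_M2 : ∑ k, px i (fun q => px k (u i) q * F k j q) (s, y)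
          = ∑ k, (px k (u i) (s, y) * px i (F k j) (s, y)
              + px i (px k (u i)) (s, y) * F k j (s, y)) :=
        Finset.sum_congr rfl (fun k _ => D_mul ((hdpxu k i) _) ((hdF k j) _) _)
      rw [e_top, e_A, e_S1, e_S2, e_M1, e_M2] at h0
      rw [hp]
      linarith [h0]
    -- rewriting pt g and px k g
    have hptg : pt g p = ∑ i, px i (pt (F i j)) p := by
      rw [show pt g p = ∑ i, pt (px i (F i j)) p from
        D_sum Finset.univ (fun i _ => (hdpxF i i j) _) _]
      exact Finset.sum_congr rfl (fun i _ => pt_px_comm (F i j) (hF i j) i p)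
    have hpxg : ∀ k, px k g p = ∑ i, px i (px k (F i j)) p := by
      intro k
      rw [show px k g p = ∑ i, px k (px i (F i j)) p from
        D_sum Finset.univ (fun i _ => (hdpxF i i j) _) _]
      exact Finset.sum_congr rfl (fun i _ => px_px_comm (F i j) (hF i j) k i p)
    -- the three auxiliary sum identities
    have hsum : ∑ i, (px i (pt (F i j)) p
          + (∑ k, (u k p * px i (px k (F i j)) p + px i (u k) p * px k (F i j) p))
          - (∑ k, (px k (u i) p * px i (F k j) p + px i (px k (u i)) p * F k j p))) = 0 := by
      rw [Finset.sum_congr rfl (fun i _ => expand i)]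
      simp
    have hzero2 : ∀ k : Fin d, ∑ i, px i (px k (u i)) p = 0 := by
      intro k
      have h1 : ∀ i : Fin d, px i (px k (u i)) p = px k (px i (u i)) p :=
        fun i => px_px_comm (u i) (hu i) i k p
      rw [Finset.sum_congr rfl (fun i _ => h1 i)]
      rw [show ∑ i, px k (px i (u i)) p = px k (fun q => ∑ i, px i (u i) q) p from
        (D_sum Finset.univ (fun i _ => ((hdpxu i i).comp differentiable_id).differentiableAt) _).symm]
      rw [show (fun q => ∑ i, px i (u i) q) = fun _ => (0:ℝ) from funext hdiv]
      simp [px]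
    -- final arithmetic
    have e5 : ∑ k, u k p * px k g p = ∑ k, u k p * ∑ i, px i (px k (F i j)) p :=
      Finset.sum_congr rfl (fun k _ => by rw [hpxg k])
    rw [hptg, e5]
    have e1 : ∑ i, (px i (pt (F i j)) p) + ∑ i, ∑ k, u k p * px i (px k (F i j)) p
        + ∑ i, ∑ k, px i (u k) p * px k (F i j) p
        - (∑ i, ∑ k, px k (u i) p * px i (F k j) p
          + ∑ i, ∑ k, px i (px k (u i)) p * F k j p) = 0 := by
      have := hsum
      simp only [Finset.sum_add_distrib, Finset.sum_sub_distrib] at this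
      linarith
    have e2 : ∑ i, ∑ k, px k (u i) p * px i (F k j) p
        = ∑ i, ∑ k, px i (u k) p * px k (F i j) p := Finset.sum_comm
    have e3 : ∑ i, ∑ k, px i (px k (u i)) p * F k j p = 0 := by
      rw [Finset.sum_comm]
      rw [Finset.sum_congr rfl (fun k _ => (Finset.sum_mul ..).symm)]
      rw [Finset.sum_congr rfl (fun k _ => by rw [hzero2 k, zero_mul])]
      simp
    have e4 : ∑ k, u k p * ∑ i, px i (px k (F i j)) p
        = ∑ i, ∑ k, u k p * px i (px k (F i j)) p := by
      rw [Finset.sum_comm]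
      exact Finset.sum_congr rfl (fun k _ => Finset.mul_sum ..)
    rw [e4]
    linarith [e1, e2, e3]
  -- ============ ODE part ============
  -- the vector field
  set U : ℝ → EuclideanSpace ℝ (Fin d) → EuclideanSpace ℝ (Fin d) :=
    fun s y => (EuclideanSpace.equiv (Fin d) ℝ).symm (fun i => u i (s, y)) with hUdef
  have hUapp : ∀ s y i, U s y i = u i (s, y) := fun s y i => rfl
  set C' : ℝ := max C 0 with hC'def
  have hC'0 : 0 ≤ C' := le_max_right _ _
  set K : ℝ := (d : ℝ) * C' with hKdef
  have hK0 : 0 ≤ K := by positivity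
  set L : ℝ := (d : ℝ) * K with hLdef
  have hL0 : 0 ≤ L := by positivity
  have hd1 : (1 : ℝ) ≤ (d : ℝ) := by exact_mod_cast hd
  -- coordinatewise Lipschitz bound
  have hcoord : ∀ s ∈ Set.Icc (0:ℝ) T, ∀ (y z : EuclideanSpace ℝ (Fin d)) (i : Fin d),
      ‖u i (s, y) - u i (s, z)‖ ≤ K * ‖y - z‖ := by
    intro s hs y z i
    have hdiffslice : ∀ w : EuclideanSpace ℝ (Fin d),
        DifferentiableAt ℝ (fun y' : EuclideanSpace ℝ (Fin d) => u i (s, y')) w := by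
      intro w
      exact ((hdu i).comp ((differentiable_const s).prodMk differentiable_id)).differentiableAt
    have hbound : ∀ w : EuclideanSpace ℝ (Fin d),
        ‖fderiv ℝ (fun y' : EuclideanSpace ℝ (Fin d) => u i (s, y')) w‖ ≤ K := by
      intro w
      apply ContinuousLinearMap.opNorm_le_bound _ hK0
      intro v
      rw [fderiv_slice (u i) ((hdu i) (s, w)) v]
      rw [fderiv_dir (u i) 0 v]
      rw [zero_mul, zero_add]
      calc ‖∑ k, v k * px k (u i) (s, w)‖
          ≤ ∑ k, ‖v k * px k (u i) (s, w)‖ := norm_sum_le _ _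
        _ ≤ ∑ k : Fin d, ‖v‖ * C' := by
            apply Finset.sum_le_sum
            intro k _
            rw [norm_mul]
            apply mul_le_mul (abs_coord_le_norm v k) _ (norm_nonneg _) (norm_nonneg _)
            exact le_trans (hgrad s hs w i k) (le_max_left _ _)
        _ = K * ‖v‖ := by
            rw [Finset.sum_const, Finset.card_univ, Fintype.card_fin]
            push_cast [hKdef]; ring
    have := Convex.norm_image_sub_le_of_norm_fderiv_le
      (f := fun y' : EuclideanSpace ℝ (Fin d) => u i (s, y')) (s := Set.univ)
      (fun w _ => hdiffslice w) (fun w _ => hbound w) convex_univ (Set.mem_univ z) (Set.mem_univ y)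
    simpa using this
  -- vector Lipschitz bound
  have hUlip : ∀ s ∈ Set.Icc (0:ℝ) T, ∀ y z : EuclideanSpace ℝ (Fin d),
      ‖U s y - U s z‖ ≤ L * ‖y - z‖ := by
    intro s hs y z
    have happ : ∀ i, (U s y - U s z) i = u i (s, y) - u i (s, z) := by
      intro i; simp [hUapp]
    rw [EuclideanSpace.norm_eq]
    have hsumle : ∑ i, ‖(U s y - U s z) i‖ ^ 2 ≤ (L * ‖y - z‖) ^ 2 := by
      calc ∑ i, ‖(U s y - U s z) i‖ ^ 2
          ≤ ∑ i : Fin d, (K * ‖y - z‖) ^ 2 := by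
            apply Finset.sum_le_sum
            intro i _
            rw [happ i]
            have h1 := hcoord s hs y z i
            have h2 : (0:ℝ) ≤ ‖u i (s, y) - u i (s, z)‖ := norm_nonneg _
            nlinarith
        _ = (d : ℝ) * (K * ‖y - z‖) ^ 2 := by
            rw [Finset.sum_const, Finset.card_univ, Fintype.card_fin]; push_cast; ring
        _ ≤ (L * ‖y - z‖) ^ 2 := by
            rw [hLdef]
            have hKn : (0:ℝ) ≤ K * ‖y - z‖ := by positivity
            nlinarith
    calc Real.sqrt (∑ i, ‖(U s y - U s z) i‖ ^ 2)
        ≤ Real.sqrt ((L * ‖y - z‖) ^ 2) := Real.sqrt_le_sqrt hsumle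
      _ = L * ‖y - z‖ := Real.sqrt_sq (by positivity)
  -- continuity of U in both variables
  have hUcont : ∀ y : EuclideanSpace ℝ (Fin d), Continuous (fun s : ℝ => U s y) := by
    intro y
    apply (EuclideanSpace.equiv (Fin d) ℝ).symm.continuous.comp
    apply continuous_pi
    intro i
    exact (hu i).continuous.comp (continuous_id.prodMk continuous_const)
  set Lnn : NNReal := ⟨L, hL0⟩ with hLnn
  set δ : ℝ := 1 / (2 * (L + 1)) with hδdef
  have hδpos : 0 < δ := by rw [hδdef]; positivity
  have hδL : 2 * δ * L ≤ 1 := by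
    rw [hδdef]
    have hpos : (0:ℝ) < L + 1 := by linarith
    field_simp
    linarith
  -- main induction on time steps
  have main : ∀ n : ℕ, ∀ t' ∈ Set.Icc (0:ℝ) T, t' ≤ n * δ →
      ∀ x', g (t', x') = 0 := by
    intro n
    induction n with
    | zero =>
      intro t' ht' hle x'
      have : t' = 0 := le_antisymm (by simpa using hle) ht'.1
      rw [this, hgdef]
      exact hinit x' j
    | succ n ih =>
      intro t₀ ht₀ hle x₀
      by_cases hc : t₀ ≤ n * δ
      · exact ih t₀ ht₀ hc x₀
      push_neg at hc
      have ht₀0 : 0 ≤ t₀ := ht₀.1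
      have ht₀T : t₀ ≤ T := ht₀.2
      set tmin : ℝ := max 0 (t₀ - δ) with htmindef
      have htmin0 : 0 ≤ tmin := le_max_left _ _
      have htminle : tmin ≤ t₀ := by
        apply max_le ht₀0
        linarith
      have htminnδ : tmin ≤ n * δ := by
        apply max_le
        · positivity
        · have : (↑(n+1) : ℝ) * δ = n * δ + δ := by push_cast; ring
          rw [this] at hle
          linarith
      have hIccsub : Set.Icc tmin t₀ ⊆ Set.Icc (0:ℝ) T := fun s hs =>
        ⟨le_trans htmin0 hs.1, le_trans hs.2 ht₀T⟩
      -- bound at center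
      obtain ⟨M, hM⟩ : ∃ M, ∀ s ∈ Set.Icc (0:ℝ) T, ‖U s x₀‖ ≤ M :=
        isCompact_Icc.exists_bound_of_continuousOn (hUcont x₀).continuousOn
      set M' : ℝ := max M 1 with hM'def
      have hM'1 : (1:ℝ) ≤ M' := le_max_right _ _
      have hM'0 : (0:ℝ) ≤ M' := by linarith
      set R : ℝ := 2 * δ * M' with hRdef
      have hR0 : 0 ≤ R := by positivity
      set Cb : ℝ := M' + L * R with hCbdef
      have hCb0' : 0 ≤ Cb := by rw [hCbdef]; positivity
      have hpl : IsPicardLindelof U (tmin := tmin) (tmax := t₀) ⟨t₀, htminle, le_refl t₀⟩ x₀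
          ⟨R, hR0⟩ 0 ⟨Cb, hCb0'⟩ Lnn := by
        constructor
        · intro s hs
          apply LipschitzOnWith.of_dist_le_mul
          intro y hy z hz
          rw [dist_eq_norm, dist_eq_norm]
          exact hUlip s (hIccsub hs) y z
        · intro y _
          exact (hUcont y).continuousOn
        · intro s hs y hy
          show ‖U s y‖ ≤ Cb
          have h1 : ‖U s y‖ ≤ ‖U s x₀‖ + ‖U s y - U s x₀‖ := by
            have := norm_sub_norm_le (U s y) (U s x₀)
            have h2 := norm_add_le (U s y - U s x₀) (U s x₀)
            simp only [sub_add_cancel] at h2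
            linarith
          have h2 : ‖U s y - U s x₀‖ ≤ L * R := by
            have h3 := hUlip s (hIccsub hs) y x₀
            have h4 : ‖y - x₀‖ ≤ R := by
              rw [← dist_eq_norm]
              exact Metric.mem_closedBall.mp hy
            nlinarith
          have h5 : ‖U s x₀‖ ≤ M' := le_trans (hM s (hIccsub hs)) (le_max_left _ _)
          rw [hCbdef]; linarith
        · suffices key : Cb * max (t₀ - t₀) (t₀ - tmin) ≤ R by exact le_trans key (by simp; exact le_rfl)
          have h1 : max (t₀ - t₀) (t₀ - tmin) ≤ δ := by
            apply max_le
            · linarith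
            · have : t₀ - δ ≤ tmin := le_max_right _ _
              linarith
          have hCb0 : 0 ≤ Cb := by
            rw [hCbdef]; positivity
          calc Cb * max (t₀ - t₀) (t₀ - tmin) ≤ Cb * δ := by nlinarith
            _ ≤ R := by
                rw [hCbdef, hRdef]
                have : L * (2 * δ * M') * δ ≤ M' * δ := by nlinarith
                nlinarith
      obtain ⟨f, hf0', hfd⟩ := hpl.exists_eq_forall_mem_Icc_hasDerivWithinAt₀
      have hf0 : f t₀ = x₀ := hf0'
      -- g is constant along the characteristic
      set φ : ℝ → ℝ := fun s => g (s, f s) with hφdef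
      have hφd : ∀ s ∈ Set.Icc tmin t₀, HasDerivWithinAt φ 0 (Set.Icc tmin t₀) s := by
        intro s hs
        have hcurve : HasDerivWithinAt (fun s' => ((s', f s') : ℝ × EuclideanSpace ℝ (Fin d)))
            (1, U s (f s)) (Set.Icc tmin t₀) s :=
          (hasDerivWithinAt_id s _).prodMk (hfd s hs)
        have hgF : HasFDerivAt g (fderiv ℝ g (s, f s)) (s, f s) :=
          (hgdiff (s, f s)).hasFDerivAt
        have hcomp := HasFDerivAt.comp_hasDerivWithinAt (x := s)
            (f := fun s' => ((s', f s') : ℝ × EuclideanSpace ℝ (Fin d))) hgF hcurve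
        have hval : fderiv ℝ g (s, f s) (1, U s (f s)) = 0 := by
          rw [fderiv_dir g 1 (U s (f s)), one_mul]
          have : ∑ k, (U s (f s)) k * px k g (s, f s)
              = ∑ k, u k (s, f s) * px k g (s, f s) := by
            apply Finset.sum_congr rfl
            intro k _
            rw [hUapp]
          rw [this]
          exact htg s (hIccsub hs) (f s)
        rw [hval] at hcomp
        exact hcomp
      have hφcont : ContinuousOn φ (Set.Icc tmin t₀) :=
        fun s hs => (hφd s hs).continuousWithinAt
      have hφIci : ∀ s ∈ Set.Ico tmin t₀, HasDerivWithinAt φ 0 (Set.Ici s) s := by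
        intro s hs
        apply (hφd s ⟨hs.1, hs.2.le⟩).mono_of_mem_nhdsWithin
        have hmem : Set.Ici s ∩ Set.Iio t₀ ∈ nhdsWithin s (Set.Ici s) :=
          Filter.inter_mem self_mem_nhdsWithin
            (mem_nhdsWithin_of_mem_nhds (Iio_mem_nhds hs.2))
        apply Filter.mem_of_superset hmem
        intro w hw
        exact ⟨le_trans hs.1 hw.1, le_of_lt hw.2⟩
      have hconst := constant_of_has_deriv_right_zero hφcont hφIci
      have h1 : φ t₀ = φ tmin := hconst t₀ ⟨htminle, le_refl t₀⟩
      have h2 : φ tmin = 0 := by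
        rw [hφdef]
        exact ih tmin ⟨htmin0, le_trans htminle ht₀T⟩ htminnδ (f tmin)
      have h3 : φ t₀ = g (t₀, x₀) := by
        show g (t₀, f t₀) = g (t₀, x₀)
        rw [hf0]
      rw [← h3, h1, h2]
  -- conclude
  obtain ⟨n, hn⟩ := exists_nat_ge (T / δ)
  have hTn : T ≤ n * δ := by
    rw [div_le_iff₀ hδpos] at hn
    linarith
  exact main n t ht (le_trans ht.2 hTn) x
end
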